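/- Let d have density f(ρ) = (2πλ ρ e^{−πλρ²})/(1 − e^{−πλ r²}) on [0, r], let |g|² ~ Exp(1) independent of d, and let φ = |g|² 𝓛 (d₀/d)^ε with 𝓛, d₀, ε > 0. Then for φ₀ > 0, 1 − F_φ(φ₀) = (πλ r²/(1 − e^{−πλ r²})) · (2/ε) ∫₀¹ u^{(2−ε)/ε} exp( −u φ₀/ℓ(r) − πλ r² u^{2/ε} ) du, where ℓ(r) = 𝓛 d₀^ε r^{−ε}. -/

import Mathlib

open MeasureTheory Real ProbabilityTheory Set

lemma expMeasure_one_Ici {t : ℝ} (ht : 0 ≤ t) :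
    ProbabilityTheory.expMeasure 1 (Set.Ici t) = ENNReal.ofReal (Real.exp (-t)) := by
  rw [ProbabilityTheory.expMeasure, ProbabilityTheory.gammaMeasure,
    withDensity_apply _ measurableSet_Ici]
  have h1 : ∀ᵐ x ∂(volume : Measure ℝ), x ∈ Set.Ici t →
      ProbabilityTheory.gammaPDF 1 1 x = ENNReal.ofReal (Real.exp (-x)) := by
    refine Filter.Eventually.of_forall fun x hx => ?_
    rw [ProbabilityTheory.gammaPDF_of_nonneg (ht.trans hx)]
    norm_num [Real.Gamma_one, Real.rpow_zero]
  rw [setLIntegral_congr_fun_ae measurableSet_Ici h1,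
    ← MeasureTheory.ofReal_integral_eq_lintegral_ofReal]
  · rw [MeasureTheory.integral_Ici_eq_integral_Ioi, integral_exp_neg_Ioi]
  · have h : IntegrableOn (fun x => Real.exp (-x)) (Set.Ioi t) volume := by
      simpa using exp_neg_integrableOn_Ioi t one_pos
    exact Iff.mpr integrableOn_Ici_iff_integrableOn_Ioi h
  · exact Filter.Eventually.of_forall fun x => (Real.exp_pos _).le

/-- Integral representation of the CCDF of φ = |g|²𝓛(d₀/d)^ε with d the
truncated nearest-neighbor distance and |g|² ~ Exp(1), independent. -/
theorem qom_ccdf_integral_representation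
    {Ω : Type*} [MeasurableSpace Ω] (P : Measure Ω) [IsProbabilityMeasure P]
    (d g2 : Ω → ℝ) (hd : Measurable d) (hg2 : Measurable g2)
    (hindep : ProbabilityTheory.IndepFun d g2 P)
    (lam r L d0 ε : ℝ) (hlam : 0 < lam) (hr : 0 < r) (hL : 0 < L) (hd0 : 0 < d0) (hε : 0 < ε)
    (hdrange : ∀ ω, 0 < d ω ∧ d ω ≤ r)
    (hdcdf : ∀ x : ℝ, 0 ≤ x → x ≤ r →
      (P {ω | d ω ≤ x}).toReal
        = ∫ ρ in (0 : ℝ)..x,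
            (2 * π * lam * ρ * Real.exp (-(π * lam * ρ ^ 2)))
              / (1 - Real.exp (-(π * lam * r ^ 2))))
    (hg2law : Measure.map g2 P = ProbabilityTheory.expMeasure 1) :
    ∀ φ₀ : ℝ, 0 < φ₀ →
      1 - (P {ω | g2 ω * (L * (d0 / d ω) ^ ε) < φ₀}).toReal
        = (π * lam * r ^ 2 / (1 - Real.exp (-(π * lam * r ^ 2)))) * (2 / ε)
          * ∫ u in (0 : ℝ)..1, u ^ ((2 - ε) / ε)
              * Real.exp (-(u * φ₀ / (L * d0 ^ ε * r ^ (-ε)))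
                  - π * lam * r ^ 2 * u ^ (2 / ε)) := by
  intro φ₀ hφ₀
  haveI : IsProbabilityMeasure (expMeasure 1) := isProbabilityMeasure_expMeasure one_pos
  set E : ℝ := Real.exp (-(π * lam * r ^ 2)) with hE_def
  have hEsub : 0 < 1 - E := by
    have : E < 1 := by
      rw [hE_def]
      apply Real.exp_lt_one_iff.mpr
      have : 0 < π * lam * r ^ 2 := by positivity
      linarith
    linarith
  set fpdf : ℝ → ℝ := fun ρ => 2 * π * lam * ρ * Real.exp (-(π * lam * ρ ^ 2)) / (1 - E)
    with hfpdf_def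
  have hfpdf_cont : Continuous fpdf := by
    apply Continuous.div_const
    exact (continuous_const.mul continuous_id).mul (Real.continuous_exp.comp (by continuity))
  have hfpdf_nonneg : ∀ x : ℝ, 0 ≤ x → 0 ≤ fpdf x := by
    intro x hx
    apply div_nonneg _ hEsub.le
    positivity
  have hfpdf_meas : Measurable fun ρ => ENNReal.ofReal (fpdf ρ) :=
    ENNReal.measurable_ofReal.comp hfpdf_cont.measurable
  -- the candidate law of d
  set μ : Measure ℝ := (volume.restrict (Set.Ioc 0 r)).withDensity
      (fun ρ => ENNReal.ofReal (fpdf ρ)) with hμ_def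
  -- basic integral facts
  have hIoc_int : ∀ a : ℝ, IntegrableOn fpdf (Set.Ioc 0 a) volume :=
    fun a => hfpdf_cont.integrableOn_Ioc
  have hIoc_lint : ∀ a : ℝ, 0 ≤ a →
      (∫⁻ ρ in Set.Ioc 0 a, ENNReal.ofReal (fpdf ρ))
        = ENNReal.ofReal (∫ ρ in Set.Ioc 0 a, fpdf ρ) := by
    intro a _
    rw [← MeasureTheory.ofReal_integral_eq_lintegral_ofReal (hIoc_int a)]
    exact (ae_restrict_iff' measurableSet_Ioc).mpr
      (Filter.Eventually.of_forall fun x hx => hfpdf_nonneg x hx.1.le)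
  have htotal : ∫ ρ in Set.Ioc 0 r, fpdf ρ = 1 := by
    have h1 : {ω | d ω ≤ r} = Set.univ := by
      ext ω; simp [(hdrange ω).2]
    have := hdcdf r hr.le le_rfl
    rw [h1, measure_univ, ENNReal.toReal_one, intervalIntegral.integral_of_le hr.le] at this
    exact this.symm
  -- identify the law of d
  have hmap : Measure.map d P = μ := by
    haveI : IsProbabilityMeasure (Measure.map d P) :=
      Measure.isProbabilityMeasure_map hd.aemeasurable
    refine MeasureTheory.Measure.ext_of_Iic (Measure.map d P) μ fun a => ?_
    rw [Measure.map_apply hd measurableSet_Iic, hμ_def,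
      withDensity_apply _ measurableSet_Iic,
      Measure.restrict_restrict measurableSet_Iic]
    rcases lt_or_ge a 0 with ha | ha
    · have h1 : d ⁻¹' Set.Iic a = ∅ := by
        ext ω; simp only [Set.mem_preimage, Set.mem_Iic, Set.mem_empty_iff_false, iff_false,
          not_le]
        exact ha.trans_le (hdrange ω).1.le
      have h2 : Set.Iic a ∩ Set.Ioc 0 r = ∅ := by
        ext x
        simp only [Set.mem_inter_iff, Set.mem_Iic, Set.mem_Ioc,
          Set.mem_empty_iff_false, iff_false]
        rintro ⟨h1, h2, h3⟩
        linarith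
      rw [h1, h2]
      simp
    · rcases le_or_gt a r with har | har
      · have h2 : Set.Iic a ∩ Set.Ioc 0 r = Set.Ioc 0 a := by
          ext x
          simp only [Set.mem_inter_iff, Set.mem_Iic, Set.mem_Ioc]
          constructor
          · rintro ⟨h1, h2, _⟩; exact ⟨h2, h1⟩
          · rintro ⟨h1, h2⟩; exact ⟨h2, h1, h2.trans har⟩
        rw [h2, hIoc_lint a ha]
        have hP : d ⁻¹' Set.Iic a = {ω | d ω ≤ a} := rfl
        rw [hP, ← ENNReal.ofReal_toReal (measure_ne_top P {ω | d ω ≤ a}),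
          hdcdf a ha har, intervalIntegral.integral_of_le ha]
      · have h2 : Set.Iic a ∩ Set.Ioc 0 r = Set.Ioc 0 r := by
          apply Set.inter_eq_self_of_subset_right
          exact fun x hx => Set.mem_Iic.mpr (hx.2.trans har.le)
        have h1 : d ⁻¹' Set.Iic a = Set.univ := by
          ext ω; simp only [Set.mem_preimage, Set.mem_Iic, Set.mem_univ, iff_true]
          exact (hdrange ω).2.trans har.le
        rw [h1, h2, hIoc_lint r hr.le, htotal, measure_univ, ENNReal.ofReal_one]
  -- measurability of the event
  have hmeasφ : Measurable fun ω => g2 ω * (L * (d0 / d ω) ^ ε) := by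
    apply hg2.mul
    apply measurable_const.mul
    exact (Real.continuous_rpow_const hε.le).measurable.comp (measurable_const.div hd)
  have hA : MeasurableSet {ω | g2 ω * (L * (d0 / d ω) ^ ε) < φ₀} :=
    measurableSet_lt hmeasφ measurable_const
  -- complement
  have hcompl : {ω | g2 ω * (L * (d0 / d ω) ^ ε) < φ₀}ᶜ
      = {ω | φ₀ ≤ g2 ω * (L * (d0 / d ω) ^ ε)} := by
    ext ω; simp [not_lt]
  have hLHS : 1 - (P {ω | g2 ω * (L * (d0 / d ω) ^ ε) < φ₀}).toReal
      = (P {ω | φ₀ ≤ g2 ω * (L * (d0 / d ω) ^ ε)}).toReal := by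
    rw [← hcompl, measure_compl hA (measure_ne_top P _), measure_univ,
      ENNReal.toReal_sub_of_le prob_le_one ENNReal.one_ne_top, ENNReal.toReal_one]
  rw [hLHS]
  -- product structure
  set T : Set (ℝ × ℝ) := {p : ℝ × ℝ | φ₀ ≤ p.2 * (L * (d0 / p.1) ^ ε)} with hT_def
  have hT : MeasurableSet T := by
    apply measurableSet_le measurable_const
    apply measurable_snd.mul
    apply measurable_const.mul
    exact (Real.continuous_rpow_const hε.le).measurable.comp (measurable_const.div measurable_fst)
  have hprod : P {ω | φ₀ ≤ g2 ω * (L * (d0 / d ω) ^ ε)}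
      = ((Measure.map d P).prod (expMeasure 1)) T := by
    rw [← hg2law,
      ← (ProbabilityTheory.indepFun_iff_map_prod_eq_prod_map_map hd.aemeasurable
        hg2.aemeasurable).mp hindep,
      Measure.map_apply (hd.prodMk hg2) hT]
    rfl
  have hsect : ∀ x : ℝ, 0 < x →
      (Prod.mk x ⁻¹' T) = Set.Ici (φ₀ / (L * (d0 / x) ^ ε)) := by
    intro x hx
    have hc : 0 < L * (d0 / x) ^ ε := mul_pos hL (Real.rpow_pos_of_pos (div_pos hd0 hx) ε)
    ext y
    simp only [hT_def, Set.mem_preimage, Set.mem_setOf_eq, Set.mem_Ici]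
    rw [div_le_iff₀ hc]
  -- the tail as a real integral
  set G : ℝ → ℝ := fun x => fpdf x * Real.exp (-(φ₀ * x ^ ε / (L * d0 ^ ε))) with hG_def
  have hG_cont : Continuous G := by
    apply hfpdf_cont.mul
    apply Real.continuous_exp.comp
    apply Continuous.neg
    apply Continuous.div_const
    exact continuous_const.mul (Real.continuous_rpow_const hε.le)
  have hG_nonneg : ∀ x ∈ Set.Ioc (0:ℝ) r, 0 ≤ G x := by
    intro x hx
    exact mul_nonneg (hfpdf_nonneg x hx.1.le) (Real.exp_pos _).le
  have harg : ∀ x : ℝ, 0 < x → φ₀ / (L * (d0 / x) ^ ε) = φ₀ * x ^ ε / (L * d0 ^ ε) := by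
    intro x hx
    rw [Real.div_rpow hd0.le hx.le]
    have hxε : (0:ℝ) < x ^ ε := Real.rpow_pos_of_pos hx ε
    have hdε : (0:ℝ) < d0 ^ ε := Real.rpow_pos_of_pos hd0 ε
    field_simp
  have hPtail : (P {ω | φ₀ ≤ g2 ω * (L * (d0 / d ω) ^ ε)}).toReal
      = ∫ x in Set.Ioc 0 r, G x := by
    rw [hprod, hmap, Measure.prod_apply hT, hμ_def,
      lintegral_withDensity_eq_lintegral_mul _ hfpdf_meas
        (measurable_measure_prodMk_left hT)]
    have hcongr : ∫⁻ x in Set.Ioc 0 r,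
        ((fun ρ => ENNReal.ofReal (fpdf ρ)) * fun x => expMeasure 1 (Prod.mk x ⁻¹' T)) x
        = ∫⁻ x in Set.Ioc 0 r, ENNReal.ofReal (G x) := by
      apply setLIntegral_congr_fun_ae measurableSet_Ioc
      refine Filter.Eventually.of_forall fun x hx => ?_
      have hc : 0 < L * (d0 / x) ^ ε :=
        mul_pos hL (Real.rpow_pos_of_pos (div_pos hd0 hx.1) ε)
      simp only [Pi.mul_apply]
      rw [hsect x hx.1, expMeasure_one_Ici (le_of_lt (div_pos hφ₀ hc)),
        ← ENNReal.ofReal_mul (hfpdf_nonneg x hx.1.le), hG_def]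
      simp only
      rw [harg x hx.1]
    rw [hcongr, ← MeasureTheory.ofReal_integral_eq_lintegral_ofReal
        (hG_cont.integrableOn_Ioc)
        ((ae_restrict_iff' measurableSet_Ioc).mpr
          (Filter.Eventually.of_forall hG_nonneg)),
      ENNReal.toReal_ofReal (setIntegral_nonneg measurableSet_Ioc hG_nonneg)]
  rw [hPtail]
  -- change of variables
  set ψ : ℝ → ℝ := fun u => r * u ^ (1/ε) with hψ_def
  set ψ' : ℝ → ℝ := fun u => r * ((1/ε) * u ^ (1/ε - 1)) with hψ'_def
  have hεinv : 0 < 1/ε := by positivity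
  have hψderiv : ∀ u ∈ Set.Ioo (0:ℝ) 1, HasDerivWithinAt ψ (ψ' u) (Set.Ioo 0 1) u := by
    intro u hu
    exact ((Real.hasDerivAt_rpow_const (Or.inl hu.1.ne')).const_mul r).hasDerivWithinAt
  have hψmono : StrictMonoOn ψ (Set.Ioo 0 1) := by
    intro u hu v hv huv
    exact mul_lt_mul_of_pos_left (Real.rpow_lt_rpow hu.1.le huv hεinv) hr
  have hψimage : ψ '' Set.Ioo 0 1 = Set.Ioo 0 r := by
    apply Set.Subset.antisymm
    · rintro y ⟨u, hu, rfl⟩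
      constructor
      · exact mul_pos hr (Real.rpow_pos_of_pos hu.1 _)
      · have : u ^ (1/ε) < 1 := Real.rpow_lt_one hu.1.le hu.2 hεinv
        calc r * u ^ (1/ε) < r * 1 := by exact mul_lt_mul_of_pos_left this hr
        _ = r := mul_one r
    · intro y hy
      refine ⟨(y / r) ^ ε, ⟨Real.rpow_pos_of_pos (div_pos hy.1 hr) ε, ?_⟩, ?_⟩
      · exact Real.rpow_lt_one (div_pos hy.1 hr).le ((div_lt_one hr).mpr hy.2) hε
      · show r * ((y / r) ^ ε) ^ (1/ε) = y
        rw [← Real.rpow_mul (div_pos hy.1 hr).le, mul_one_div_cancel hε.ne',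
          Real.rpow_one, mul_div_cancel₀ _ hr.ne']
  have hsub : ∫ x in Set.Ioc 0 r, G x
      = ∫ u in Set.Ioo (0:ℝ) 1, |ψ' u| • G (ψ u) := by
    rw [MeasureTheory.integral_Ioc_eq_integral_Ioo, ← hψimage,
      integral_image_eq_integral_abs_deriv_smul measurableSet_Ioo hψderiv
        (hψmono.injOn) G]
  rw [hsub, intervalIntegral.integral_of_le zero_le_one,
    MeasureTheory.integral_Ioc_eq_integral_Ioo, ← MeasureTheory.integral_const_mul]
  apply setIntegral_congr_fun measurableSet_Ioo
  intro u hu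
  have hu0 : (0:ℝ) < u := hu.1
  have hupos : (0:ℝ) < u ^ (1/ε) := Real.rpow_pos_of_pos hu0 _
  have hψ'pos : 0 < ψ' u := by
    rw [hψ'_def]
    have : (0:ℝ) < u ^ (1/ε - 1) := Real.rpow_pos_of_pos hu0 _
    positivity
  have e1 : (r * u ^ (1/ε)) ^ 2 = r ^ 2 * u ^ (2/ε) := by
    rw [mul_pow, ← Real.rpow_natCast (u ^ (1/ε)) 2, ← Real.rpow_mul hu0.le]
    congr 2
    push_cast
    ring
  have e2 : (r * u ^ (1/ε)) ^ ε = r ^ ε * u := by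
    rw [Real.mul_rpow hr.le hupos.le, ← Real.rpow_mul hu0.le,
      one_div_mul_cancel hε.ne', Real.rpow_one]
  have e3 : u ^ (1/ε - 1) * u ^ (1/ε) = u ^ ((2 - ε)/ε) := by
    rw [← Real.rpow_add hu0]
    congr 1
    field_simp
    ring
  have hrε : (0:ℝ) < r ^ ε := Real.rpow_pos_of_pos hr ε
  have hdε : (0:ℝ) < d0 ^ ε := Real.rpow_pos_of_pos hd0 ε
  have e4 : φ₀ * (r ^ ε * u) / (L * d0 ^ ε) = u * φ₀ / (L * d0 ^ ε * r ^ (-ε)) := by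
    rw [Real.rpow_neg hr.le]
    field_simp
  have hup1 : (0:ℝ) < u ^ (1/ε - 1) := Real.rpow_pos_of_pos hu0 _
  simp only [hψ_def, hψ'_def, hG_def, hfpdf_def, smul_eq_mul]
  rw [abs_of_pos (show (0:ℝ) < r * (1/ε * u ^ (1/ε - 1)) by positivity)]
  rw [e1, e2, e4]
  have e5 : Real.exp (-(π * lam * (r ^ 2 * u ^ (2/ε))))
      * Real.exp (-(u * φ₀ / (L * d0 ^ ε * r ^ (-ε))))
      = Real.exp (-(u * φ₀ / (L * d0 ^ ε * r ^ (-ε))) - π * lam * r ^ 2 * u ^ (2/ε)) := by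
    rw [← Real.exp_add]
    congr 1
    ring
  calc r * (1/ε * u ^ (1/ε - 1)) *
        (2 * π * lam * (r * u ^ (1/ε)) * Real.exp (-(π * lam * (r ^ 2 * u ^ (2/ε)))) / (1 - E)
          * Real.exp (-(u * φ₀ / (L * d0 ^ ε * r ^ (-ε)))))
      = π * lam * r ^ 2 / (1 - E) * (2/ε)
        * ((u ^ (1/ε - 1) * u ^ (1/ε)) *
          (Real.exp (-(π * lam * (r ^ 2 * u ^ (2/ε))))
            * Real.exp (-(u * φ₀ / (L * d0 ^ ε * r ^ (-ε)))))) := by ring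
    _ = π * lam * r ^ 2 / (1 - E) * (2/ε)
        * (u ^ ((2 - ε)/ε) * Real.exp (-(u * φ₀ / (L * d0 ^ ε * r ^ (-ε)))
            - π * lam * r ^ 2 * u ^ (2/ε))) := by rw [e3, e5]
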